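/- Let G be a group admitting a Følner sequence (G_n) of nonempty finite subsets (for every g ∈ G, lim_{n→∞} |gG_n △ G_n| / |G_n| = 0). Then G satisfies Yu's Property A in the following form: for every finite subset E ⊆ G and every ε > 0 there exist a finite subset F ⊆ G and a map η : G → ℓ²(G) (real-valued square-summable functions on G) such that ‖η_x‖ = 1 for all x, η_x is supported in xF = {x·f : f ∈ F} for all x, and ‖η_x − η_y‖ < ε whenever x⁻¹y ∈ E. -/

import Mathlib

open Pointwise Filter

private lemma lp_single_zero {G : Type*} [DecidableEq G] (i : G) :
    lp.single (E := fun _ : G => ℝ) 2 i 0 = 0 := by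
  apply lp.ext
  funext j
  rw [lp.single_apply]
  simp only [Pi.single_apply]
  split <;> simp

private lemma lp_single_sub {G : Type*} [DecidableEq G] (i : G) (a b : ℝ) :
    lp.single (E := fun _ : G => ℝ) 2 i (a - b)
      = lp.single 2 i a - lp.single 2 i b := by
  apply lp.ext
  funext j
  simp only [lp.coeFn_sub, Pi.sub_apply, lp.single_apply]
  simp only [Pi.single_apply]
  split <;> simp

private lemma lp_norm_sq_sum_single {G : Type*} [DecidableEq G] (S : Finset G) (f : G → ℝ) :
    ‖∑ g ∈ S, lp.single (E := fun _ : G => ℝ) 2 g (f g)‖ ^ 2 = ∑ g ∈ S, (f g) ^ 2 := by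
  have h := lp.norm_sum_single (p := 2) (E := fun _ : G => ℝ) (by norm_num) f S
  have h2 : ((2 : ENNReal).toReal) = (2 : ℝ) := by norm_num
  rw [h2] at h
  have hrw : ∀ x : ℝ, 0 ≤ x → x ^ (2 : ℝ) = x ^ (2 : ℕ) := by
    intro x hx
    rw [show (2:ℝ) = ((2:ℕ):ℝ) by norm_num, Real.rpow_natCast]
  rw [hrw _ (norm_nonneg _)] at h
  rw [h]
  apply Finset.sum_congr rfl
  intro g _
  rw [hrw _ (norm_nonneg _), Real.norm_eq_abs, sq_abs]

private lemma lp_sum_single_apply {G : Type*} [DecidableEq G] (S : Finset G) (c : ℝ) (g : G) :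
    (((∑ i ∈ S, lp.single (E := fun _ : G => ℝ) 2 i c) : lp (fun _ : G => ℝ) 2) : ∀ _ : G, ℝ) g
      = if g ∈ S then c else 0 := by
  rw [lp.coeFn_sum]
  simp [lp.single_apply, Finset.sum_dite_eq]

/-- A group admitting a Følner sequence satisfies Yu's Property A: for every
finite `E ⊆ G` and `ε > 0` there exist a finite `F ⊆ G` and unit vectors
`η x ∈ ℓ²(G)` supported in `xF`, with `‖η x − η y‖ < ε` whenever `x⁻¹y ∈ E`. -/
theorem amenable_property_A {G : Type*} [Group G] [DecidableEq G]
    (Gseq : ℕ → Finset G) (hne : ∀ n, (Gseq n).Nonempty)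
    (hFolner : ∀ g : G,
      Tendsto (fun n => ((symmDiff (g • Gseq n) (Gseq n)).card : ℝ) / (Gseq n).card)
        atTop (nhds 0))
    (E : Finset G) (ε : ℝ) (hε : 0 < ε) :
    ∃ (F : Finset G) (η : G → lp (fun _ : G => ℝ) 2),
      (∀ x : G, ‖η x‖ = 1) ∧
      (∀ x g : G, η x g ≠ 0 → g ∈ x • F) ∧
      (∀ x y : G, x⁻¹ * y ∈ E → ‖η x - η y‖ < ε) := by
  -- choose a good index n
  obtain ⟨n, hn⟩ : ∃ n, ∀ a ∈ E,
      ((symmDiff (a • Gseq n) (Gseq n)).card : ℝ) / (Gseq n).card < ε ^ 2 := by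
    have h : ∀ᶠ n in atTop, ∀ a ∈ E,
        ((symmDiff (a • Gseq n) (Gseq n)).card : ℝ) / (Gseq n).card < ε ^ 2 := by
      rw [eventually_all_finset]
      intro a _
      exact (hFolner a).eventually_lt_const (by positivity)
    exact h.exists
  set N : ℕ := (Gseq n).card with hNdef
  have hN : 0 < N := (hne n).card_pos
  have hNR : (0:ℝ) < N := by exact_mod_cast hN
  set c : ℝ := Real.sqrt ((N : ℝ)⁻¹) with hcdef
  have hc2 : c ^ 2 = (N : ℝ)⁻¹ := Real.sq_sqrt (by positivity)
  refine ⟨Gseq n, fun x => ∑ g ∈ x • Gseq n, lp.single 2 g c, ?_, ?_, ?_⟩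
  · -- unit norm
    intro x
    have hsq : ‖(∑ g ∈ x • Gseq n, lp.single (E := fun _ : G => ℝ) 2 g c)‖ ^ 2 = 1 := by
      rw [lp_norm_sq_sum_single (x • Gseq n) (fun _ => c)]
      rw [Finset.sum_const, Finset.card_smul_finset, nsmul_eq_mul, hc2, ← hNdef]
      field_simp
    calc ‖(∑ g ∈ x • Gseq n, lp.single (E := fun _ : G => ℝ) 2 g c)‖
        = Real.sqrt (‖(∑ g ∈ x • Gseq n, lp.single (E := fun _ : G => ℝ) 2 g c)‖ ^ 2) :=
          (Real.sqrt_sq (norm_nonneg _)).symm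
      _ = 1 := by rw [hsq, Real.sqrt_one]
  · -- support
    intro x g hg
    by_contra hmem
    apply hg
    rw [lp_sum_single_apply, if_neg hmem]
  · -- difference estimate
    intro x y hxy
    set a : G := x⁻¹ * y with hadef
    set S : Finset G := x • Gseq n with hSdef
    set T : Finset G := y • Gseq n with hTdef
    have hTeq : T = x • (a • Gseq n) := by
      rw [hTdef, ← mul_smul, hadef, mul_inv_cancel_left]
    have hcard : (symmDiff S T).card = (symmDiff (a • Gseq n) (Gseq n)).card := by
      rw [hTeq, hSdef, ← Finset.smul_finset_symmDiff, Finset.card_smul_finset, symmDiff_comm]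
    -- rewrite the difference as a single sum
    have key : (∑ g ∈ S, lp.single (E := fun _ : G => ℝ) 2 g c)
        - (∑ g ∈ T, lp.single (E := fun _ : G => ℝ) 2 g c)
        = ∑ g ∈ S ∪ T, lp.single (E := fun _ : G => ℝ) 2 g
            ((if g ∈ S then c else 0) - (if g ∈ T then c else 0)) := by
      have e1 : ∀ (U : Finset G), U ⊆ S ∪ T →
          (∑ g ∈ S ∪ T, lp.single (E := fun _ : G => ℝ) 2 g (if g ∈ U then c else 0))
            = ∑ g ∈ U, lp.single (E := fun _ : G => ℝ) 2 g c := by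
        intro U hU
        have hcong : ∀ g ∈ S ∪ T, lp.single (E := fun _ : G => ℝ) 2 g (if g ∈ U then c else 0)
            = if g ∈ U then lp.single (E := fun _ : G => ℝ) 2 g c else 0 := by
          intro g _
          split <;> simp [lp_single_zero]
        rw [Finset.sum_congr rfl hcong, Finset.sum_ite_mem, Finset.inter_eq_right.mpr hU]
      simp only [lp_single_sub, Finset.sum_sub_distrib]
      rw [e1 S Finset.subset_union_left, e1 T Finset.subset_union_right]
    have hsq : ‖(∑ g ∈ S, lp.single (E := fun _ : G => ℝ) 2 g c)
        - (∑ g ∈ T, lp.single (E := fun _ : G => ℝ) 2 g c)‖ ^ 2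
        = ((symmDiff S T).card : ℝ) * c ^ 2 := by
      rw [key, lp_norm_sq_sum_single]
      have hsub : symmDiff S T ⊆ S ∪ T := by
        intro g hg
        rw [Finset.mem_symmDiff] at hg
        rcases hg with ⟨h1, _⟩ | ⟨h1, _⟩
        · exact Finset.mem_union_left _ h1
        · exact Finset.mem_union_right _ h1
      rw [← Finset.sum_subset hsub (fun g hgu hgd => by
        rw [Finset.mem_symmDiff] at hgd
        push_neg at hgd
        rw [Finset.mem_union] at hgu
        rcases hgu with h | h
        · have : g ∈ T := hgd.1 h
          simp [h, this]
        · have : g ∈ S := hgd.2 h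
          simp [h, this])]
      have hcong : ∑ g ∈ symmDiff S T, ((if g ∈ S then c else 0) - if g ∈ T then c else 0) ^ 2
          = ∑ _g ∈ symmDiff S T, c ^ 2 := by
        refine Finset.sum_congr rfl fun g hg => ?_
        rw [Finset.mem_symmDiff] at hg
        rcases hg with ⟨h1, h2⟩ | ⟨h1, h2⟩ <;> simp [h1, h2]
      rw [hcong, Finset.sum_const, nsmul_eq_mul]
    have hlt : ‖(∑ g ∈ S, lp.single (E := fun _ : G => ℝ) 2 g c)
        - (∑ g ∈ T, lp.single (E := fun _ : G => ℝ) 2 g c)‖ ^ 2 < ε ^ 2 := by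
      rw [hsq, hcard, hc2]
      have := hn a hxy
      rw [div_eq_mul_inv] at this
      exact this
    have := lt_of_pow_lt_pow_left₀ 2 hε.le hlt
    simpa using this
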